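/- Let $x$ be a positive odd integer with $x \equiv 1 \pmod{8}$ or $x \equiv 5 \pmod{8}$, and $x \not\equiv 1 \pmod{32}$, and let $k \ge 2$ be an integer. Then: (a) if $x \equiv 1 \pmod{8}$ and $k = 2$, then $v_2(T_k(x)) = v_2(7x+1) - 1$; (b) if $x \equiv 1 \pmod{8}$ and $k = 3$, then $v_2(T_k(x)) = v_2((5x+3)(3x+1)) - 2$; (c) if $x \equiv 5 \pmod{8}$ and $k \ge 3$ is odd, then $v_2(T_k(x)) = v_2(3x+1)$; (d) if $x \equiv 5 \pmod{8}$ and $k \ge 2$ is even, then $v_2(T_k(x)) = 1$; (e) if $x \equiv 9 \pmod{16}$ and $k \ge 4$ is even, then $v_2(T_k(x)) = 2$; (f) if $x \equiv 9 \pmod{16}$ and $k \ge 5$ is odd, or if $x \equiv 17 \pmod{32}$ and $k \ge 4$ is even, then $v_2(T_k(x)) = 3$; (g) if $x \equiv 17 \pmod{32}$ and $k \ge 5$ is odd, then $v_2(T_k(x)) = 4$. -/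
import Mathlib


/-- `T k x = (x+1)^k + (x+2)^k + ... + (2x)^k`. -/
def T (k x : ℕ) : ℕ := ∑ i ∈ Finset.Icc (x + 1) (2 * x), i ^ k

section Helpers

lemma T_Ioc (k x : ℕ) : T k x = ∑ i ∈ Finset.Ioc x (2*x), i ^ k := by
  rw [T, Finset.Icc_add_one_left_eq_Ioc]

lemma Tpos (k x : ℕ) (hx : 0 < x) : 0 < T k x := by
  rw [T_Ioc]
  apply Finset.sum_pos
  · intro i hi
    simp only [Finset.mem_Ioc] at hi
    exact pow_pos (by omega) _
  · exact ⟨2*x, by simp only [Finset.mem_Ioc]; omega⟩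

lemma pvn_eq (n v : ℕ) (hn : n ≠ 0) (h1 : 2^v ∣ n) (h2 : ¬ 2^(v+1) ∣ n) :
    padicValNat 2 n = v := by
  have hle : v ≤ padicValNat 2 n := (padicValNat_dvd_iff_le hn).mp h1
  have hlt : ¬ (v + 1 ≤ padicValNat 2 n) := fun h => h2 ((padicValNat_dvd_iff_le hn).mpr h)
  omega

lemma Tstep (k x : ℕ) : T k (x+1) + (x+1)^k = T k x + (2*x+1)^k + (2*x+2)^k := by
  rw [T_Ioc, T_Ioc]
  have h1 : (∑ i ∈ Finset.Ioc x (x+1), i^k) + (∑ i ∈ Finset.Ioc (x+1) (2*(x+1)), i^k)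
      = ∑ i ∈ Finset.Ioc x (2*(x+1)), i^k := Finset.sum_Ioc_consecutive _ (by omega) (by omega)
  have h2 : ∑ i ∈ Finset.Ioc x (x+1), i^k = (x+1)^k := by
    have : Finset.Ioc x (x+1) = {x+1} := by
      ext j; simp only [Finset.mem_Ioc, Finset.mem_singleton]; omega
    rw [this, Finset.sum_singleton]
  have h3 : ∑ i ∈ Finset.Ioc x (2*(x+1)), i^k
      = (∑ i ∈ Finset.Ioc x (2*x), i^k) + (2*x+1)^k + (2*x+2)^k := by
    have e1 : 2*(x+1) = (2*x+1)+1 := by ring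
    rw [e1, Finset.sum_Ioc_succ_top (by omega), show 2*x+1 = (2*x)+1 from rfl,
      Finset.sum_Ioc_succ_top (by omega)]
  omega

lemma T2_closed (x : ℕ) : 6 * T 2 x = x * (2*x+1) * (7*x+1) := by
  induction x with
  | zero => simp [T]
  | succ n ih =>
    have hs := Tstep 2 n
    zify at hs ih ⊢
    linear_combination 6 * hs + ih

lemma T3_closed (x : ℕ) : 4 * T 3 x = x^2 * (3*x+1) * (5*x+3) := by
  induction x with
  | zero => simp [T]
  | succ n ih =>
    have hs := Tstep 3 n
    zify at hs ih ⊢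
    linear_combination 4 * hs + ih

lemma sumOdd (b a : ℕ) : ∑ j ∈ Finset.Ioc a b, (j % 2) = (b - b/2) - (a - a/2) := by
  induction b with
  | zero =>
    have : Finset.Ioc a 0 = ∅ := by simp
    rw [this]; simp
  | succ n ih =>
    by_cases h : a ≤ n
    · rw [Finset.sum_Ioc_succ_top h, ih]
      omega
    · have h2 : Finset.Ioc a (n+1) = ∅ := Finset.Ioc_eq_empty (by omega)
      rw [h2, Finset.sum_empty]
      omega

end Helpers

section PowMod

lemma odd_sq_mod8 (j : ℕ) (hj : j % 2 = 1) : j^2 % 8 = 1 := by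
  obtain ⟨a, ha⟩ : ∃ a, j = 2*a+1 := ⟨j/2, by omega⟩
  obtain ⟨b, hb⟩ : ∃ b, a*(a+1) = 2*b := by
    obtain ⟨b, hb⟩ := Nat.even_mul_succ_self a; exact ⟨b, by omega⟩
  have h1 : j^2 = 4*(a*(a+1)) + 1 := by rw [ha]; ring
  rw [hb] at h1
  omega

lemma odd_pow4_mod16 (j : ℕ) (hj : j % 2 = 1) : j^4 % 16 = 1 := by
  obtain ⟨a, ha⟩ : ∃ a, j = 2*a+1 := ⟨j/2, by omega⟩
  obtain ⟨b, hb⟩ : ∃ b, a*(a+1) = 2*b := by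
    obtain ⟨b, hb⟩ := Nat.even_mul_succ_self a; exact ⟨b, by omega⟩
  have h1 : j^4 = 16*(a^4+2*a^3+a^2) + 8*(a*(a+1)) + 1 := by rw [ha]; ring
  rw [hb] at h1
  set A := a^4+2*a^3+a^2 with hA
  omega

lemma odd_evenpow_mod8 (j e : ℕ) (hj : j % 2 = 1) (he : e % 2 = 0) : j^e % 8 = 1 := by
  obtain ⟨t, ht⟩ : ∃ t, e = 2*t := ⟨e/2, by omega⟩
  rw [ht, pow_mul, Nat.pow_mod, odd_sq_mod8 j hj, Nat.one_pow]

lemma odd_evenpow_mod4 (j e : ℕ) (hj : j % 2 = 1) (he : e % 2 = 0) : j^e % 4 = 1 := by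
  have := odd_evenpow_mod8 j e hj he
  omega

lemma odd_pow4k_mod16 (j e : ℕ) (hj : j % 2 = 1) (he : e % 4 = 0) : j^e % 16 = 1 := by
  obtain ⟨t, ht⟩ : ∃ t, e = 4*t := ⟨e/4, by omega⟩
  rw [ht, pow_mul, Nat.pow_mod, odd_pow4_mod16 j hj, Nat.one_pow]

lemma odd_pow4k2_mod16 (j e : ℕ) (hj : j % 2 = 1) (he : e % 4 = 2) : j^e % 16 = j^2 % 16 := by
  obtain ⟨t, ht⟩ : ∃ t, e = 4*t + 2 := ⟨e/4, by omega⟩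
  have : j^e = (j^4)^t * j^2 := by rw [ht]; ring
  rw [this, Nat.mul_mod, Nat.pow_mod, odd_pow4_mod16 j hj, Nat.one_pow]
  simp [Nat.mod_mod_of_dvd]

lemma odd_oddpow_mod8 (j e : ℕ) (hj : j % 2 = 1) (he : e % 2 = 1) : j^e % 8 = j % 8 := by
  obtain ⟨t, ht⟩ : ∃ t, e = 2*t+1 := ⟨e/2, by omega⟩
  have : j^e = (j^2)^t * j := by rw [ht]; ring
  rw [this, Nat.mul_mod, Nat.pow_mod, odd_sq_mod8 j hj, Nat.one_pow]
  simp [Nat.mod_mod_of_dvd]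

lemma even_pow_dvd (j e r : ℕ) (hj : j % 2 = 0) (h : r ≤ e) : 2^r ∣ j^e := by
  obtain ⟨a, ha⟩ : ∃ a, j = 2*a := ⟨j/2, by omega⟩
  calc (2:ℕ)^r ∣ 2^e := pow_dvd_pow 2 h
    _ ∣ j^e := by rw [ha, mul_pow]; exact dvd_mul_right _ _

end PowMod

section EvenParts

lemma partD (x k : ℕ) (hx : x % 8 = 5) (hk2 : 2 ≤ k) (hke : k % 2 = 0) : T k x % 4 = 2 := by
  rw [T_Ioc, Finset.sum_nat_mod]
  have h : ∀ j ∈ Finset.Ioc x (2*x), j^k % 4 = j % 2 := by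
    intro j _
    by_cases hj : j % 2 = 1
    · rw [odd_evenpow_mod4 j k hj hke]; omega
    · have := even_pow_dvd j k 2 (by omega) hk2
      omega
  rw [Finset.sum_congr rfl h, sumOdd]
  omega

lemma partE (x k : ℕ) (hx : x % 16 = 9) (hk2 : 3 ≤ k) (hke : k % 2 = 0) : T k x % 8 = 4 := by
  rw [T_Ioc, Finset.sum_nat_mod]
  have h : ∀ j ∈ Finset.Ioc x (2*x), j^k % 8 = j % 2 := by
    intro j _
    by_cases hj : j % 2 = 1
    · rw [odd_evenpow_mod8 j k hj hke]; omega
    · have := even_pow_dvd j k 3 (by omega) hk2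
      omega
  rw [Finset.sum_congr rfl h, sumOdd]
  omega

lemma partF0 (x k : ℕ) (hx : x % 32 = 17) (hk2 : 4 ≤ k) (hke : k % 4 = 0) : T k x % 16 = 8 := by
  rw [T_Ioc, Finset.sum_nat_mod]
  have h : ∀ j ∈ Finset.Ioc x (2*x), j^k % 16 = j % 2 := by
    intro j _
    by_cases hj : j % 2 = 1
    · rw [odd_pow4k_mod16 j k hj hke]; omega
    · have := even_pow_dvd j k 4 (by omega) hk2
      omega
  rw [Finset.sum_congr rfl h, sumOdd]
  omega

lemma three_dvd_cube (s : ℕ) : 3 ∣ s^3 + 2*s := by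
  induction s with
  | zero => decide
  | succ n ih =>
    have h : (n+1)^3 + 2*(n+1) = (n^3 + 2*n) + 3*(n^2+n+1) := by ring
    omega

lemma partF2 (x k : ℕ) (hx : x % 32 = 17) (hk2 : 4 ≤ k) (hke : k % 4 = 2) : T k x % 16 = 8 := by
  obtain ⟨y, hy⟩ : ∃ y, x = 2*y + 1 := ⟨x/2, by omega⟩
  have hy16 : y % 16 = 8 := by omega
  set E := ∑ j ∈ Finset.Ioc x (2*x), (if j % 2 = 1 then j^2 else 0) with hE
  have hTE : T k x % 16 = E % 16 := by
    rw [T_Ioc, Finset.sum_nat_mod, hE,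
      Finset.sum_nat_mod (Finset.Ioc x (2*x)) 16 (fun j => if j % 2 = 1 then j^2 else 0)]
    congr 1
    apply Finset.sum_congr rfl
    intro j _
    by_cases hj : j % 2 = 1
    · rw [odd_pow4k2_mod16 j k hj hke, if_pos hj]
    · have := even_pow_dvd j k 4 (by omega) hk2
      rw [if_neg hj]
      omega
  have hEven : ∑ j ∈ Finset.Ioc x (2*x), (if j % 2 = 0 then j^2 else 0)
      = 4 * (T 2 y + x^2) := by
    have h1 : ∑ j ∈ Finset.Ioc x (2*x), (if j % 2 = 0 then j^2 else 0)
        = ∑ j ∈ (Finset.Ioc x (2*x)).filter (fun j => j % 2 = 0), j^2 :=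
      (Finset.sum_filter _ _).symm
    have h2 : ∑ j ∈ (Finset.Ioc x (2*x)).filter (fun j => j % 2 = 0), j^2
        = ∑ i ∈ Finset.Ioc y x, (2*i)^2 := by
      apply Finset.sum_nbij' (fun j => j / 2) (fun i => 2 * i)
      · intro a ha
        simp only [Finset.mem_filter, Finset.mem_Ioc] at ha ⊢
        omega
      · intro a ha
        simp only [Finset.mem_filter, Finset.mem_Ioc] at ha ⊢
        omega
      · intro a ha
        simp only [Finset.mem_filter, Finset.mem_Ioc] at ha
        omega
      · intro a ha
        simp only [Finset.mem_Ioc] at ha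
        omega
      · intro a ha
        simp only [Finset.mem_filter, Finset.mem_Ioc] at ha
        have : 2 * (a / 2) = a := by omega
        rw [this]
    have h3 : ∑ i ∈ Finset.Ioc y x, (2*i)^2 = 4 * (T 2 y + x^2) := by
      have hx2 : x = (2*y) + 1 := by omega
      rw [hx2, Finset.sum_Ioc_succ_top (by omega)]
      rw [T_Ioc]
      have : ∀ i, (2*i)^2 = 4 * i^2 := fun i => by ring
      rw [Finset.sum_congr rfl (fun i _ => this i), ← Finset.mul_sum]
      ring
    rw [h1, h2, h3]
  have hsplit : E + 4 * (T 2 y + x^2) = T 2 x := by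
    rw [← hEven, hE, T_Ioc, ← Finset.sum_add_distrib]
    apply Finset.sum_congr rfl
    intro j _
    by_cases hj : j % 2 = 1
    · have hj0 : ¬ (j % 2 = 0) := by omega
      rw [if_pos hj, if_neg hj0]
      omega
    · have hj0 : j % 2 = 0 := by omega
      rw [if_neg hj, if_pos hj0]
      omega
  have h6E : 6 * E = 56*y^3 + 72*y^2 + 22*y := by
    have c1 := T2_closed x
    have c2 := T2_closed y
    rw [hy] at hsplit c1
    zify at hsplit c1 c2 ⊢
    linear_combination 6 * hsplit + c1 - 4 * c2
  obtain ⟨s, hs⟩ : ∃ s, y = 16*s + 8 := ⟨y/16, by omega⟩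
  obtain ⟨w, hw⟩ := three_dvd_cube s
  have key : 6 * E = 48 + 96*(348 + 1987*s + 3776*s^2 + 2389*s^3) + 32*(s^3 + 2*s) := by
    rw [h6E, hs]; ring
  rw [hw] at key
  set M := 348 + 1987*s + 3776*s^2 + 2389*s^3 with hM
  omega

end EvenParts

section Pairing

def Qq (k c j : ℕ) : ℤ :=
  ∑ i ∈ Finset.range k, (k.choose (i+1) : ℤ) * (c:ℤ)^i * (-(j:ℤ))^(k-1-i)

lemma pair_sum (k c j : ℕ) (hk : Odd k) (hj : j ≤ c) :
    ((c - j : ℕ) : ℤ)^k + (j:ℤ)^k = (c:ℤ) * Qq k c j := by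
  have h1 : ((c - j : ℕ) : ℤ) = (c:ℤ) + (-(j:ℤ)) := by
    push_cast [hj]; ring
  rw [h1, add_pow, Finset.sum_range_succ']
  have e0 : (c:ℤ)^0 * (-(j:ℤ))^(k-0) * (k.choose 0 : ℤ) = -((j:ℤ)^k) := by
    simp [hk.neg_pow]
  rw [e0, Qq, Finset.mul_sum]
  have e1 : ∀ i ∈ Finset.range k,
      (c:ℤ)^(i+1) * (-(j:ℤ))^(k-(i+1)) * (k.choose (i+1) : ℤ)
      = (c:ℤ) * ((k.choose (i+1) : ℤ) * (c:ℤ)^i * (-(j:ℤ))^(k-1-i)) := by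
    intro i _
    have : k - (i+1) = k - 1 - i := by omega
    rw [this, pow_succ]
    ring
  rw [Finset.sum_congr rfl e1]
  ring

lemma T_pair (y k : ℕ) (hk : Odd k) :
    (T k (2*y+1) : ℤ) = ((6*y+4 : ℕ) : ℤ) * (∑ j ∈ Finset.Ioc (2*y+1) (3*y+1), Qq k (6*y+4) j)
      + ((3*y+2 : ℕ) : ℤ)^k := by
  rw [T_Ioc]
  push_cast
  rw [show 2*(2*y+1) = 4*y+2 by ring]
  have hsplit : (∑ j ∈ Finset.Ioc (2*y+1) (4*y+2), (j:ℤ)^k)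
      = (∑ j ∈ Finset.Ioc (2*y+1) (3*y+2), (j:ℤ)^k)
      + (∑ j ∈ Finset.Ioc (3*y+2) (4*y+2), (j:ℤ)^k) :=
    (Finset.sum_Ioc_consecutive _ (by omega : 2*y+1 ≤ 3*y+2) (by omega : 3*y+2 ≤ 4*y+2)).symm
  have htop : (∑ j ∈ Finset.Ioc (2*y+1) (3*y+2), (j:ℤ)^k)
      = (∑ j ∈ Finset.Ioc (2*y+1) (3*y+1), (j:ℤ)^k) + ((3*y+2 : ℕ) : ℤ)^k := by
    rw [show 3*y+2 = (3*y+1)+1 from rfl, Finset.sum_Ioc_succ_top (by omega)]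
  have hrefl : (∑ j ∈ Finset.Ioc (3*y+2) (4*y+2), (j:ℤ)^k)
      = ∑ j ∈ Finset.Ioc (2*y+1) (3*y+1), (((6*y+4) - j : ℕ) : ℤ)^k := by
    apply Finset.sum_nbij' (fun j => 6*y+4 - j) (fun j => 6*y+4 - j)
    · intro a ha; simp only [Finset.mem_Ioc] at ha ⊢; omega
    · intro a ha; simp only [Finset.mem_Ioc] at ha ⊢; omega
    · intro a ha; simp only [Finset.mem_Ioc] at ha; omega
    · intro a ha; simp only [Finset.mem_Ioc] at ha; omega
    · intro a ha
      simp only [Finset.mem_Ioc] at ha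
      have : 6*y+4 - (6*y+4 - a) = a := by omega
      rw [this]
  have hpair : ∀ j ∈ Finset.Ioc (2*y+1) (3*y+1),
      (((6*y+4) - j : ℕ) : ℤ)^k + (j:ℤ)^k = ((6*y+4 : ℕ) : ℤ) * Qq k (6*y+4) j := by
    intro j hj
    simp only [Finset.mem_Ioc] at hj
    exact pair_sum k (6*y+4) j hk (by omega)
  have hsum : (∑ j ∈ Finset.Ioc (2*y+1) (3*y+1), (((6*y+4) - j : ℕ) : ℤ)^k)
      + (∑ j ∈ Finset.Ioc (2*y+1) (3*y+1), (j:ℤ)^k)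
      = (6*(y:ℤ)+4) * (∑ j ∈ Finset.Ioc (2*y+1) (3*y+1), Qq k (6*y+4) j) := by
    rw [← Finset.sum_add_distrib, Finset.sum_congr rfl hpair, ← Finset.mul_sum]
    push_cast
    ring
  rw [hsplit, htop, hrefl]
  push_cast
  linarith [hsum]

lemma natmod_cast (a b n : ℕ) (h : a % n = b % n) : (a:ℤ) ≡ (b:ℤ) [ZMOD (n:ℤ)] :=
  Int.natCast_modEq_iff.mpr h

lemma sum_modEq (s : Finset ℕ) (f g : ℕ → ℤ) (n : ℤ) (h : ∀ j ∈ s, f j ≡ g j [ZMOD n]) :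
    (∑ j ∈ s, f j) ≡ (∑ j ∈ s, g j) [ZMOD n] := by
  show _ % n = _ % n
  rw [Finset.sum_int_mod s n f, Finset.sum_int_mod s n g, Finset.sum_congr rfl h]

lemma Qq_head (k c j : ℕ) (hk : 1 ≤ k) :
    Qq k c j = (k:ℤ) * (-(j:ℤ))^(k-1)
      + ∑ i ∈ (Finset.range k).erase 0, (k.choose (i+1) : ℤ) * (c:ℤ)^i * (-(j:ℤ))^(k-1-i) := by
  rw [Qq, ← Finset.add_sum_erase _ _ (Finset.mem_range.mpr hk)]
  norm_num

lemma Qq_modEq_one (k c j : ℕ) (hk : 1 ≤ k) (d : ℤ) (hc : d ∣ (c:ℤ)) :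
    Qq k c j ≡ (k:ℤ) * (-(j:ℤ))^(k-1) [ZMOD d] := by
  rw [Qq_head k c j hk]
  have hdvd : d ∣ ∑ i ∈ (Finset.range k).erase 0,
      (k.choose (i+1) : ℤ) * (c:ℤ)^i * (-(j:ℤ))^(k-1-i) := by
    apply Finset.dvd_sum
    intro i hi
    have hi0 : i ≠ 0 := (Finset.mem_erase.mp hi).1
    exact dvd_mul_of_dvd_left
      (dvd_mul_of_dvd_right (hc.trans (dvd_pow_self (c:ℤ) hi0)) _) _
  exact (Int.modEq_iff_dvd.mpr (by simpa using hdvd)).symm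

lemma Qq_head2 (k c j : ℕ) (hk : 2 ≤ k) :
    Qq k c j = (k:ℤ) * (-(j:ℤ))^(k-1) + (k.choose 2 : ℤ) * (c:ℤ) * (-(j:ℤ))^(k-2)
      + ∑ i ∈ ((Finset.range k).erase 0).erase 1,
          (k.choose (i+1) : ℤ) * (c:ℤ)^i * (-(j:ℤ))^(k-1-i) := by
  rw [Qq, ← Finset.add_sum_erase _ _ (Finset.mem_range.mpr (by omega : 0 < k)),
    ← Finset.add_sum_erase _ _
      (Finset.mem_erase.mpr ⟨one_ne_zero, Finset.mem_range.mpr (by omega : 1 < k)⟩)]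
  have h1 : k - 1 - 1 = k - 2 := by omega
  norm_num [h1]
  ring

lemma Qq_modEq_two (k c j : ℕ) (hk : 2 ≤ k) (d : ℤ) (hc : d ∣ (c:ℤ)^2) :
    Qq k c j ≡ (k:ℤ) * (-(j:ℤ))^(k-1) + (k.choose 2 : ℤ) * (c:ℤ) * (-(j:ℤ))^(k-2) [ZMOD d] := by
  rw [Qq_head2 k c j hk]
  have hdvd : d ∣ ∑ i ∈ ((Finset.range k).erase 0).erase 1,
      (k.choose (i+1) : ℤ) * (c:ℤ)^i * (-(j:ℤ))^(k-1-i) := by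
    apply Finset.dvd_sum
    intro i hi
    have hi1 : i ≠ 1 := (Finset.mem_erase.mp hi).1
    have hi0 : i ≠ 0 := (Finset.mem_erase.mp (Finset.mem_erase.mp hi).2).1
    have : (c:ℤ)^2 ∣ (c:ℤ)^i := pow_dvd_pow _ (by omega)
    exact dvd_mul_of_dvd_left (dvd_mul_of_dvd_right (hc.trans this) _) _
  exact (Int.modEq_iff_dvd.mpr (by simpa using hdvd)).symm

lemma Qterm2 (k c j : ℕ) (hk3 : 3 ≤ k) (hko : k % 2 = 1) (hc : (2:ℤ) ∣ (c:ℤ)) :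
    Qq k c j ≡ ((j % 2 : ℕ) : ℤ) * (k:ℤ) [ZMOD 2] := by
  have h1 := Qq_modEq_one k c j (by omega) 2 hc
  have he : Even (k-1) := Nat.even_iff.mpr (by omega)
  rw [he.neg_pow] at h1
  apply h1.trans
  have : (k:ℤ) * ((j:ℤ))^(k-1) = ((k * j^(k-1) : ℕ) : ℤ) := by push_cast; ring
  rw [this]
  by_cases hj : j % 2 = 1
  · have hp : j^(k-1) % 2 = 1 := by
      have := odd_evenpow_mod4 j (k-1) hj (by omega); omega
    exact natmod_cast (k * j^(k-1)) ((j % 2) * k) 2 (by rw [Nat.mul_mod, hp, hj]; omega)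
  · have hp : j^(k-1) % 2 = 0 := by
      have := even_pow_dvd j (k-1) 1 (by omega) (by omega)
      simp only [pow_one] at this
      omega
    have hj0 : j % 2 = 0 := by omega
    exact natmod_cast (k * j^(k-1)) ((j % 2) * k) 2 (by rw [Nat.mul_mod, hp, hj0]; omega)

lemma Qterm4 (k c j : ℕ) (hk5 : 5 ≤ k) (hko : k % 2 = 1) (hc : (4:ℤ) ∣ (c:ℤ)) :
    Qq k c j ≡ ((j % 2 : ℕ) : ℤ) * (k:ℤ) [ZMOD 4] := by
  have h1 := Qq_modEq_one k c j (by omega) 4 hc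
  have he : Even (k-1) := Nat.even_iff.mpr (by omega)
  rw [he.neg_pow] at h1
  apply h1.trans
  have : (k:ℤ) * ((j:ℤ))^(k-1) = ((k * j^(k-1) : ℕ) : ℤ) := by push_cast; ring
  rw [this]
  by_cases hj : j % 2 = 1
  · have hp : j^(k-1) % 4 = 1 := odd_evenpow_mod4 j (k-1) hj (by omega)
    exact natmod_cast (k * j^(k-1)) ((j % 2) * k) 4 (by rw [Nat.mul_mod, hp, hj]; omega)
  · have hp : j^(k-1) % 4 = 0 := by
      have : 2^2 ∣ j^(k-1) := even_pow_dvd j (k-1) 2 (by omega) (by omega)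
      have h4 : (4:ℕ) ∣ j^(k-1) := by simpa using this
      omega
    have hj0 : j % 2 = 0 := by omega
    exact natmod_cast (k * j^(k-1)) ((j % 2) * k) 4 (by rw [Nat.mul_mod, hp, hj0]; omega)

lemma Qterm8 (k c j : ℕ) (hk5 : 5 ≤ k) (hko : k % 2 = 1) (hc : c % 8 = 4) :
    Qq k c j ≡ ((j % 2 : ℕ) : ℤ) * ((k:ℤ) + 4 * (k.choose 2 : ℤ)) [ZMOD 8] := by
  have hc2 : (8:ℤ) ∣ (c:ℤ)^2 := by
    have h4 : (4:ℤ) ∣ (c:ℤ) := by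
      have : (4:ℕ) ∣ c := by omega
      exact_mod_cast this
    obtain ⟨a, ha⟩ := h4
    rw [ha]
    exact ⟨2*a^2, by ring⟩
  have h1 := Qq_modEq_two k c j (by omega) 8 hc2
  have he : Even (k-1) := Nat.even_iff.mpr (by omega)
  have ho : Odd (k-2) := Nat.odd_iff.mpr (by omega)
  rw [he.neg_pow, ho.neg_pow] at h1
  apply h1.trans
  by_cases hj : j % 2 = 1
  · have a1 : ((j^(k-1) : ℕ) : ℤ) ≡ 1 [ZMOD 8] :=
      natmod_cast (j^(k-1)) 1 8 (by rw [odd_evenpow_mod8 j (k-1) hj (by omega)])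
    have a2 : ((c * j^(k-2) : ℕ) : ℤ) ≡ 4 [ZMOD 8] :=
      natmod_cast (c * j^(k-2)) 4 8
        (by rw [Nat.mul_mod, hc, odd_oddpow_mod8 j (k-2) hj (by omega)]; omega)
    push_cast at a1 a2
    have comb : (k:ℤ) * (j:ℤ)^(k-1) + (k.choose 2 : ℤ) * (c:ℤ) * (-((j:ℤ)^(k-2)))
        ≡ (k:ℤ) * 1 - (k.choose 2 : ℤ) * 4 [ZMOD 8] := by
      have b1 := Int.ModEq.mul_left (k:ℤ) a1
      have b2 := Int.ModEq.mul_left (k.choose 2 : ℤ) a2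
      have : (k.choose 2 : ℤ) * (c:ℤ) * (-((j:ℤ)^(k-2)))
          = -((k.choose 2:ℤ) * ((c:ℤ) * (j:ℤ)^(k-2))) := by ring
      rw [this]
      exact b1.add b2.neg
    apply comb.trans
    rw [hj]
    have : ((1:ℕ):ℤ) * ((k:ℤ) + 4 * (k.choose 2 : ℤ)) = (k:ℤ) + 4 * (k.choose 2:ℤ) := by
      push_cast; ring
    rw [this]
    show _ % (8:ℤ) = _ % 8
    omega
  · have hj0 : j % 2 = 0 := by omega
    have p1 : (8:ℤ) ∣ (j:ℤ)^(k-1) := by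
      have h8 : (8:ℕ) ∣ j^(k-1) := by simpa using even_pow_dvd j (k-1) 3 (by omega) (by omega)
      exact_mod_cast h8
    have p2 : (8:ℤ) ∣ (j:ℤ)^(k-2) := by
      have h8 : (8:ℕ) ∣ j^(k-2) := by simpa using even_pow_dvd j (k-2) 3 (by omega) (by omega)
      exact_mod_cast h8
    rw [hj0]
    have : ((0:ℕ):ℤ) * ((k:ℤ) + 4 * (k.choose 2 : ℤ)) = 0 := by push_cast; ring
    rw [this]
    have hd : (8:ℤ) ∣ (k:ℤ) * (j:ℤ)^(k-1) + (k.choose 2 : ℤ) * (c:ℤ) * (-((j:ℤ)^(k-2))) := by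
      apply dvd_add
      · exact dvd_mul_of_dvd_right p1 _
      · exact Dvd.dvd.mul_left (p2.neg_right) _
    exact (Int.modEq_zero_iff_dvd).mpr hd

end Pairing

section OddParts

lemma partC (x k : ℕ) (hx : x % 8 = 5) (hk3 : 3 ≤ k) (hko : k % 2 = 1) :
    padicValNat 2 (T k x) = padicValNat 2 (3*x+1) := by
  obtain ⟨y, hy⟩ : ∃ y, x = 2*y+1 := ⟨x/2, by omega⟩
  have hy4 : y % 4 = 2 := by omega
  have hT := T_pair y k (Nat.odd_iff.mpr hko)
  rw [← hy] at hT
  set c := 6*y+4 with hc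
  set S := ∑ j ∈ Finset.Ioc x (3*y+1), Qq k c j with hS
  -- S is odd
  have hc2 : (2:ℤ) ∣ (c:ℤ) := by
    have : (2:ℕ) ∣ c := by omega
    exact_mod_cast this
  have hterm : ∀ j ∈ Finset.Ioc x (3*y+1), Qq k c j ≡ ((j % 2 : ℕ):ℤ) * (k:ℤ) [ZMOD 2] :=
    fun j _ => Qterm2 k c j hk3 hko hc2
  have hsum := sum_modEq _ _ _ _ hterm
  set N := ∑ j ∈ Finset.Ioc x (3*y+1), (j % 2) with hN
  have hNsum : (∑ j ∈ Finset.Ioc x (3*y+1), ((j % 2 : ℕ):ℤ) * (k:ℤ)) = (N:ℤ) * (k:ℤ) := by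
    rw [hN, ← Finset.sum_mul, Nat.cast_sum]
  have hNval : N % 2 = 1 := by rw [hN, sumOdd]; omega
  rw [hNsum] at hsum
  have hNk : ((N:ℤ) * (k:ℤ)) % 2 = 1 := by
    have h1 : (N*k) % 2 = 1 % 2 := by rw [Nat.mul_mod, hNval, hko]
    have h2 := natmod_cast (N*k) 1 2 h1
    have h3 : ((N*k : ℕ):ℤ) = (N:ℤ)*(k:ℤ) := by push_cast; ring
    have h4 : ((N*k : ℕ):ℤ) % 2 = (1:ℤ) % 2 := h2
    rw [h3] at h4
    omega
  have hSodd : S % 2 = 1 := by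
    have h1 : S % 2 = ((N:ℤ) * (k:ℤ)) % 2 := hsum
    omega
  -- valuation setup
  have hcn0 : c ≠ 0 := by omega
  set v := padicValNat 2 c with hv
  have hv3 : 3 ≤ v := (padicValNat_dvd_iff_le hcn0).mp
    ((by norm_num : (2:ℕ)^3 = 8) ▸ (show (8:ℕ) ∣ c by omega))
  obtain ⟨u, hu⟩ := (pow_padicValNat_dvd : 2^v ∣ c)
  have hund : ¬ 2^(v+1) ∣ c := pow_succ_padicValNat_not_dvd hcn0
  have hu1 : u % 2 = 1 := by
    by_contra h
    obtain ⟨w, hw⟩ : ∃ w, u = 2*w := ⟨u/2, by omega⟩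
    exact hund ⟨w, by rw [hu, hw, pow_succ]; ring⟩
  obtain ⟨P, hP⟩ : ∃ P, (2:ℕ)^(v-1) = P := ⟨_, rfl⟩
  have hP2 : (2:ℕ)^v = 2 * P := by
    rw [← hP, ← pow_succ']
    congr 1
    omega
  have hm : 3*y+2 = P * u := by
    rw [hP2] at hu
    have h2 : c = 2*(P*u) := by rw [hu]; ring
    omega
  have hmz : ((3*y+2 : ℕ):ℤ) = (P:ℤ) * (u:ℤ) := by exact_mod_cast hm
  have hPz : ((2:ℤ))^(v-1) = (P:ℤ) := by exact_mod_cast hP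
  have hkv1 : v ≤ (v-1)*k := by
    have h3 : (v-1)*3 ≤ (v-1)*k := Nat.mul_le_mul_left _ hk3
    omega
  have hkv2 : v+1 ≤ (v-1)*k := by
    have h3 : (v-1)*3 ≤ (v-1)*k := Nat.mul_le_mul_left _ hk3
    omega
  have hcz : (c:ℤ) = 2^v * (u:ℤ) := by exact_mod_cast hu
  have hd1 : (2:ℤ)^v ∣ (T k x : ℤ) := by
    rw [hT]
    apply dvd_add
    · rw [hcz]
      exact Dvd.dvd.mul_right (dvd_mul_right _ _) S
    · rw [hmz, mul_pow, ← hPz, ← pow_mul]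
      exact dvd_mul_of_dvd_left (pow_dvd_pow 2 hkv1) _
  have hd2 : ¬ (2:ℤ)^(v+1) ∣ (T k x : ℤ) := by
    intro hcon
    have hmk : (2:ℤ)^(v+1) ∣ ((3*y+2:ℕ):ℤ)^k := by
      rw [hmz, mul_pow, ← hPz, ← pow_mul]
      exact dvd_mul_of_dvd_left (pow_dvd_pow 2 hkv2) _
    have hcs : (2:ℤ)^(v+1) ∣ (c:ℤ) * S := by
      have heq : (c:ℤ)*S = (T k x:ℤ) - ((3*y+2:ℕ):ℤ)^k := by rw [hT]; ring
      rw [heq]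
      exact dvd_sub hcon hmk
    rw [hcz, pow_succ, mul_assoc] at hcs
    have h2 : (2:ℤ) ∣ (u:ℤ) * S :=
      (mul_dvd_mul_iff_left (a := (2:ℤ)^v) (pow_ne_zero v two_ne_zero)).mp hcs
    have m1 : (u:ℤ) ≡ 1 [ZMOD 2] := natmod_cast u 1 2 (by omega)
    have m2 : S ≡ 1 [ZMOD 2] := by
      show S % 2 = 1 % 2
      omega
    have m4 : ((u:ℤ) * S) % 2 = ((1:ℤ)*1) % 2 := m1.mul m2
    omega
  have hTn0 : T k x ≠ 0 := (Tpos k x (by omega)).ne'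
  have hd1n : 2^v ∣ T k x := by exact_mod_cast hd1
  have hd2n : ¬ 2^(v+1) ∣ T k x := fun h => hd2 (by exact_mod_cast h)
  rw [pvn_eq _ v hTn0 hd1n hd2n, hv]
  congr 1
  omega

lemma partFodd (x k : ℕ) (hx : x % 16 = 9) (hk5 : 5 ≤ k) (hko : k % 2 = 1) :
    T k x % 16 = 8 := by
  obtain ⟨y, hy⟩ : ∃ y, x = 2*y+1 := ⟨x/2, by omega⟩
  have hy8 : y % 8 = 4 := by omega
  have hT := T_pair y k (Nat.odd_iff.mpr hko)
  rw [← hy] at hT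
  set c := 6*y+4 with hc
  set S := ∑ j ∈ Finset.Ioc x (3*y+1), Qq k c j with hS
  have hc4 : (4:ℤ) ∣ (c:ℤ) := by
    have : (4:ℕ) ∣ c := by omega
    exact_mod_cast this
  have hterm : ∀ j ∈ Finset.Ioc x (3*y+1), Qq k c j ≡ ((j % 2 : ℕ):ℤ) * (k:ℤ) [ZMOD 4] :=
    fun j _ => Qterm4 k c j hk5 hko hc4
  have hsum := sum_modEq _ _ _ _ hterm
  set N := ∑ j ∈ Finset.Ioc x (3*y+1), (j % 2) with hN
  have hNsum : (∑ j ∈ Finset.Ioc x (3*y+1), ((j % 2 : ℕ):ℤ) * (k:ℤ)) = (N:ℤ) * (k:ℤ) := by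
    rw [hN, ← Finset.sum_mul, Nat.cast_sum]
  have hNval : N % 4 = 2 := by rw [hN, sumOdd]; omega
  rw [hNsum] at hsum
  have hNk : ((N:ℤ) * (k:ℤ)) % 4 = 2 := by
    have h1 : (N*k) % 4 = 2 % 4 := by rw [Nat.mul_mod, hNval]; omega
    have h2 := natmod_cast (N*k) 2 4 h1
    have h3 : ((N*k : ℕ):ℤ) = (N:ℤ)*(k:ℤ) := by push_cast; ring
    have h4 : ((N*k : ℕ):ℤ) % 4 = (2:ℤ) % 4 := h2
    rw [h3] at h4
    omega
  have hS4 : S % 4 = 2 := by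
    have h1 : S % 4 = ((N:ℤ) * (k:ℤ)) % 4 := hsum
    omega
  -- final: T ≡ 8 mod 16
  have hmk : (16:ℕ) ∣ (3*y+2)^k := by
    simpa using even_pow_dvd (3*y+2) k 4 (by omega) (by omega)
  have hmkz : (16:ℤ) ∣ ((3*y+2:ℕ):ℤ)^k := by exact_mod_cast hmk
  obtain ⟨a, ha⟩ : ∃ a, c = 8*a+4 := ⟨c/8, by omega⟩
  obtain ⟨t, ht⟩ : ∃ t : ℤ, S = 4*t+2 := ⟨S/4, by omega⟩
  have hcsz : (c:ℤ) * S = 16*(2*(a:ℤ)*t + a + t) + 8 := by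
    rw [ht, show (c:ℤ) = 8*(a:ℤ)+4 by exact_mod_cast ha]
    ring
  obtain ⟨M, hM⟩ := hmkz
  have hTz : (T k x : ℤ) = 16*(2*(a:ℤ)*t+a+t) + 8 + 16*M := by rw [hT, hcsz, hM]
  have hT16 : (T k x : ℤ) % 16 = 8 := by
    rw [hTz]
    set A := 2*(a:ℤ)*t+a+t with hA
    omega
  omega

lemma partG (x k : ℕ) (hx : x % 32 = 17) (hk5 : 5 ≤ k) (hko : k % 2 = 1) :
    T k x % 32 = 16 := by
  obtain ⟨y, hy⟩ : ∃ y, x = 2*y+1 := ⟨x/2, by omega⟩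
  have hy16 : y % 16 = 8 := by omega
  have hT := T_pair y k (Nat.odd_iff.mpr hko)
  rw [← hy] at hT
  set c := 6*y+4 with hc
  set S := ∑ j ∈ Finset.Ioc x (3*y+1), Qq k c j with hS
  have hc8 : c % 8 = 4 := by omega
  have hterm : ∀ j ∈ Finset.Ioc x (3*y+1),
      Qq k c j ≡ ((j % 2 : ℕ):ℤ) * ((k:ℤ) + 4 * (k.choose 2 : ℤ)) [ZMOD 8] :=
    fun j _ => Qterm8 k c j hk5 hko hc8
  have hsum := sum_modEq _ _ _ _ hterm
  set N := ∑ j ∈ Finset.Ioc x (3*y+1), (j % 2) with hN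
  have hNsum : (∑ j ∈ Finset.Ioc x (3*y+1), ((j % 2 : ℕ):ℤ) * ((k:ℤ) + 4 * (k.choose 2 : ℤ)))
      = (N:ℤ) * ((k:ℤ) + 4 * (k.choose 2 : ℤ)) := by
    rw [hN, ← Finset.sum_mul, Nat.cast_sum]
  have hNval : N % 8 = 4 := by rw [hN, sumOdd]; omega
  rw [hNsum] at hsum
  have hNk : ((N:ℤ) * ((k:ℤ) + 4 * (k.choose 2 : ℤ))) % 8 = 4 := by
    have m1 : (N:ℤ) ≡ 4 [ZMOD 8] := natmod_cast N 4 8 (by omega)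
    have m2 := m1.mul_right ((k:ℤ) + 4 * (k.choose 2 : ℤ))
    have m3 : ((N:ℤ) * ((k:ℤ) + 4 * (k.choose 2 : ℤ))) % 8
        = ((4:ℤ) * ((k:ℤ) + 4 * (k.choose 2 : ℤ))) % 8 := m2
    have m4 : ((4:ℤ) * ((k:ℤ) + 4 * (k.choose 2 : ℤ))) % 8 = 4 := by
      have : (4:ℤ) * ((k:ℤ) + 4 * (k.choose 2 : ℤ)) = 4*(k:ℤ) + 16*(k.choose 2 : ℤ) := by ring
      rw [this]
      omega
    omega
  have hS8 : S % 8 = 4 := by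
    have h1 : S % 8 = ((N:ℤ) * ((k:ℤ) + 4 * (k.choose 2 : ℤ))) % 8 := hsum
    omega
  have hmk : (32:ℕ) ∣ (3*y+2)^k := by
    simpa using even_pow_dvd (3*y+2) k 5 (by omega) (by omega)
  have hmkz : (32:ℤ) ∣ ((3*y+2:ℕ):ℤ)^k := by exact_mod_cast hmk
  obtain ⟨a, ha⟩ : ∃ a, c = 8*a+4 := ⟨c/8, by omega⟩
  obtain ⟨t, ht⟩ : ∃ t : ℤ, S = 8*t+4 := ⟨S/8, by omega⟩
  have hcsz : (c:ℤ) * S = 32*(2*(a:ℤ)*t + a + t) + 16 := by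
    rw [ht, show (c:ℤ) = 8*(a:ℤ)+4 by exact_mod_cast ha]
    ring
  obtain ⟨M, hM⟩ := hmkz
  have hTz : (T k x : ℤ) = 32*(2*(a:ℤ)*t+a+t) + 16 + 32*M := by rw [hT, hcsz, hM]
  have hT32 : (T k x : ℤ) % 32 = 16 := by
    rw [hTz]
    set A := 2*(a:ℤ)*t+a+t with hA
    omega
  omega

end OddParts

section ClosedFormParts

lemma partA (x : ℕ) (hx : x % 8 = 1) (hx0 : 0 < x) :
    padicValNat 2 (T 2 x) = padicValNat 2 (7*x+1) - 1 := by
  set v := padicValNat 2 (7*x+1) with hv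
  have h70 : 7*x+1 ≠ 0 := by omega
  obtain ⟨u, hu⟩ := (pow_padicValNat_dvd : 2^v ∣ 7*x+1)
  have hnd : ¬ 2^(v+1) ∣ 7*x+1 := pow_succ_padicValNat_not_dvd h70
  have hv3 : 3 ≤ v := (padicValNat_dvd_iff_le h70).mp
    ((by norm_num : (2:ℕ)^3 = 8) ▸ (show (8:ℕ) ∣ 7*x+1 by omega))
  have hu1 : u % 2 = 1 := by
    by_contra h
    obtain ⟨w, hw⟩ : ∃ w, u = 2*w := ⟨u/2, by omega⟩
    exact hnd ⟨w, by rw [hu, hw, pow_succ]; ring⟩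
  have hT6 := T2_closed x
  have h6 : 6 * T 2 x = 2^v * (x*(2*x+1)*u) := by rw [hT6, hu]; ring
  have hA : (x*(2*x+1)*u) % 2 = 1 := by
    rw [Nat.mul_mod, Nat.mul_mod x, show x % 2 = 1 by omega,
      show (2*x+1) % 2 = 1 by omega, hu1]
  obtain ⟨P, hP⟩ : ∃ P, (2:ℕ)^(v-1) = P := ⟨_, rfl⟩
  have hP2 : (2:ℕ)^v = 2 * P := by
    rw [← hP, ← pow_succ']
    congr 1
    omega
  -- 2^(v-1) ∣ T 2 x
  have hc23 : Nat.Coprime (2^v) 3 := Nat.Coprime.pow_left _ (by decide)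
  have hdvd6 : 2^v ∣ 6 * T 2 x := ⟨x*(2*x+1)*u, h6⟩
  have hdvd2 : 2^v ∣ 2 * T 2 x := by
    apply hc23.dvd_of_dvd_mul_left
    have : 3 * (2 * T 2 x) = 6 * T 2 x := by ring
    rw [this]
    exact hdvd6
  have hd1 : 2^(v-1) ∣ T 2 x := by
    rw [hP2] at hdvd2
    obtain ⟨q, hq⟩ := hdvd2
    have hq2 : 2 * T 2 x = 2*(P*q) := by rw [hq]; ring
    have hTq : T 2 x = P * q := by omega
    rw [hP]
    exact ⟨q, hTq⟩
  have hd2 : ¬ 2^(v-1+1) ∣ T 2 x := by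
    intro hcon
    have hvv : v - 1 + 1 = v := by omega
    rw [hvv] at hcon
    obtain ⟨t, ht⟩ := hcon
    have : 2^v * (x*(2*x+1)*u) = 2^v * (6*t) := by
      rw [← h6, ht]; ring
    have heq : x*(2*x+1)*u = 6*t := Nat.eq_of_mul_eq_mul_left (pow_pos (by norm_num) v) this
    omega
  rw [pvn_eq _ (v-1) (Tpos 2 x hx0).ne' hd1 hd2]

lemma partB (x : ℕ) (hx : x % 8 = 1) (hx0 : 0 < x) :
    padicValNat 2 (T 3 x) = padicValNat 2 ((5*x+3)*(3*x+1)) - 2 := by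
  set v := padicValNat 2 ((5*x+3)*(3*x+1)) with hv
  have hp0 : (5*x+3)*(3*x+1) ≠ 0 := by positivity
  obtain ⟨u, hu⟩ := (pow_padicValNat_dvd : 2^v ∣ (5*x+3)*(3*x+1))
  have hnd : ¬ 2^(v+1) ∣ (5*x+3)*(3*x+1) := pow_succ_padicValNat_not_dvd hp0
  have hv2 : 2 ≤ v := by
    apply (padicValNat_dvd_iff_le hp0).mp
    have h1 : (2:ℕ)^2 = 4 := by norm_num
    rw [h1]
    obtain ⟨a, hA⟩ : ∃ a, 5*x+3 = 2*a := ⟨(5*x+3)/2, by omega⟩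
    obtain ⟨b, hB⟩ : ∃ b, 3*x+1 = 2*b := ⟨(3*x+1)/2, by omega⟩
    exact ⟨a*b, by rw [hA, hB]; ring⟩
  have hu1 : u % 2 = 1 := by
    by_contra h
    obtain ⟨w, hw⟩ : ∃ w, u = 2*w := ⟨u/2, by omega⟩
    exact hnd ⟨w, by rw [hu, hw, pow_succ]; ring⟩
  have hT4 := T3_closed x
  have h4 : 4 * T 3 x = 2^v * (x^2*u) := by
    rw [hT4]
    have : x^2 * (3*x+1) * (5*x+3) = x^2 * ((5*x+3)*(3*x+1)) := by ring
    rw [this, hu]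
    ring
  have hA : (x^2*u) % 2 = 1 := by
    rw [Nat.mul_mod, Nat.pow_mod, show x % 2 = 1 by omega, hu1]
  obtain ⟨P, hP⟩ : ∃ P, (2:ℕ)^(v-2) = P := ⟨_, rfl⟩
  have hP2 : (2:ℕ)^v = 4 * P := by
    rw [← hP, show (4:ℕ) = 2^2 by norm_num, ← pow_add]
    congr 1
    omega
  have h4' : 4 * T 3 x = 4 * (P * (x^2*u)) := by rw [h4, hP2]; ring
  have hTeq : T 3 x = P * (x^2*u) := by omega
  have hd1 : 2^(v-2) ∣ T 3 x := by
    rw [hP]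
    exact ⟨x^2*u, hTeq⟩
  have hP0 : 0 < P := by rw [← hP]; positivity
  have hd2 : ¬ 2^(v-2+1) ∣ T 3 x := by
    intro hcon
    obtain ⟨t, ht⟩ := hcon
    have ht2 : T 3 x = P * (2*t) := by
      rw [ht, pow_succ, hP]
      ring
    have heq : P * (x^2*u) = P * (2*t) := by rw [← hTeq, ht2]
    have := Nat.eq_of_mul_eq_mul_left hP0 heq
    omega
  rw [pvn_eq _ (v-2) (Tpos 3 x hx0).ne' hd1 hd2]

end ClosedFormParts

theorem stmt_18 (x k : ℕ) (hx : 0 < x) (hxodd : Odd x)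
    (hx8 : x % 8 = 1 ∨ x % 8 = 5) (hx32 : x % 32 ≠ 1) (hk : 2 ≤ k) :
    (x % 8 = 1 → k = 2 → padicValNat 2 (T k x) = padicValNat 2 (7 * x + 1) - 1) ∧
    (x % 8 = 1 → k = 3 →
      padicValNat 2 (T k x) = padicValNat 2 ((5 * x + 3) * (3 * x + 1)) - 2) ∧
    (x % 8 = 5 → 3 ≤ k → Odd k → padicValNat 2 (T k x) = padicValNat 2 (3 * x + 1)) ∧
    (x % 8 = 5 → Even k → padicValNat 2 (T k x) = 1) ∧
    (x % 16 = 9 → 4 ≤ k → Even k → padicValNat 2 (T k x) = 2) ∧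
    ((x % 16 = 9 ∧ 5 ≤ k ∧ Odd k) ∨ (x % 32 = 17 ∧ 4 ≤ k ∧ Even k) →
      padicValNat 2 (T k x) = 3) ∧
    (x % 32 = 17 → 5 ≤ k → Odd k → padicValNat 2 (T k x) = 4) := by
  have hTn0 : T k x ≠ 0 := (Tpos k x hx).ne'
  refine ⟨?_, ?_, ?_, ?_, ?_, ?_, ?_⟩
  · intro h1 h2
    subst h2
    exact partA x h1 hx
  · intro h1 h2
    subst h2
    exact partB x h1 hx
  · intro h1 h2 h3
    exact partC x k h1 h2 (Nat.odd_iff.mp h3)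
  · intro h1 h2
    have hm := partD x k h1 hk (Nat.even_iff.mp h2)
    exact pvn_eq _ 1 hTn0 (by rw [pow_one]; omega)
      (by rw [(by norm_num : (2:ℕ)^(1+1) = 4)]; omega)
  · intro h1 h2 h3
    have hm := partE x k h1 (by omega) (Nat.even_iff.mp h3)
    exact pvn_eq _ 2 hTn0 (by rw [(by norm_num : (2:ℕ)^2 = 4)]; omega)
      (by rw [(by norm_num : (2:ℕ)^(2+1) = 8)]; omega)
  · intro h1
    have hm : T k x % 16 = 8 := by
      rcases h1 with ⟨h1, h2, h3⟩ | ⟨h1, h2, h3⟩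
      · exact partFodd x k h1 h2 (Nat.odd_iff.mp h3)
      · have hke := Nat.even_iff.mp h3
        rcases (by omega : k % 4 = 0 ∨ k % 4 = 2) with h4 | h4
        · exact partF0 x k h1 h2 h4
        · exact partF2 x k h1 h2 h4
    exact pvn_eq _ 3 hTn0 (by rw [(by norm_num : (2:ℕ)^3 = 8)]; omega)
      (by rw [(by norm_num : (2:ℕ)^(3+1) = 16)]; omega)
  · intro h1 h2 h3
    have hm := partG x k h1 h2 (Nat.odd_iff.mp h3)
    exact pvn_eq _ 4 hTn0 (by rw [(by norm_num : (2:ℕ)^4 = 16)]; omega)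
      (by rw [(by norm_num : (2:ℕ)^(4+1) = 32)]; omega)
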